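/- arXiv:2409.11330 — 3 statements merged into one kernel-verified Lean document; each statement's English description precedes it below -/
import Mathlib

section
/- Fix T > 0 and a complete filtered probability space (Ω, 𝓕, (𝓕_t)_{t ∈ [0,T]}, ℙ). Let p ∈ [2,∞) and let γ, γ', λ, λ' ∈ [0,1] with γ < λ and γ' < λ'. For each k ≥ 0 let W^(k) : [0,T] → ℝ^n be a path and let (X^(k), (X^(k))') be a stochastic controlled rough path over W^(k). Assume: (i) for every k ≥ 1, (X^(k), (X^(k))') ∈ 𝐃_{W^(k)}^{λ,λ'}L_p(ℝ^d) and sup_{k ≥ 1} ‖(X^(k), (X^(k))')‖_{𝐃_{W^(k)}^{λ,λ'}L_p} < ∞; (ii) (X^(0), (X^(0))') ∈ 𝐃_{W^(0)}^{γ,γ'}L_p(ℝ^d); (iii) ‖X^(k), (X^(k))'; X^(0), (X^(0))'‖_{W^(k), W^(0); γ,γ'; p} → 0 as k → ∞. Then for every η ∈ (γ, λ) and η' ∈ (γ', λ'), (X^(0), (X^(0))') ∈ 𝐃_{W^(0)}^{η,η'}L_p(ℝ^d) and ‖X^(k), (X^(k))'; X^(0), (X^(0))'‖_{W^(k), W^(0);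 η,η'; p} → 0 as k → ∞. -/
open MeasureTheory Filter Topology Set ENNReal NNReal

noncomputable section

variable {Ω : Type*} {m0 : MeasurableSpace Ω}

/-- The set of pairs `(s,t)` with `0 ≤ s < t ≤ T`. -/
def SPairs (T : ℝ) : Set (ℝ × ℝ) := {q | 0 ≤ q.1 ∧ q.1 < q.2 ∧ q.2 ≤ T}

/-- Progressive measurability of a process on the time interval `[0,T]` with respect to
the filtration `ℱ`. -/
def ProgMeasOn (T : ℝ) (ℱ : Filtration ℝ m0) {E : Type*} [TopologicalSpace E]
    (X : ℝ → Ω → E) : Prop :=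
  ∀ t ∈ Icc (0:ℝ) T,
    StronglyMeasurable[(inferInstanceAs (MeasurableSpace (Icc (0:ℝ) t)) : MeasurableSpace (Icc (0:ℝ) t)).prod (ℱ t)]
      (fun q : Icc (0:ℝ) t × Ω => X (q.1 : ℝ) q.2)

/-- `sup_{t ∈ [0,T]} ‖X_t‖_{L^p}`, valued in `ℝ≥0∞`. -/
def supLp (T : ℝ) (μ : Measure Ω) (p : ℝ) {E : Type*} [NormedAddCommGroup E]
    (X : ℝ → Ω → E) : ℝ≥0∞ :=
  ⨆ t : Icc (0:ℝ) T, eLpNorm (X (t : ℝ)) (ENNReal.ofReal p) μ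

/-- `‖δX‖_{γ;p} = sup_{0 ≤ s < t ≤ T} ‖X_t − X_s‖_{L^p} / (t−s)^γ`, valued in `ℝ≥0∞`. -/
def deltaLp (T : ℝ) (μ : Measure Ω) (γ p : ℝ) {E : Type*} [NormedAddCommGroup E]
    (X : ℝ → Ω → E) : ℝ≥0∞ :=
  ⨆ q : SPairs T,
    eLpNorm (fun ω => X (q : ℝ × ℝ).2 ω - X (q : ℝ × ℝ).1 ω) (ENNReal.ofReal p) μ /
      ENNReal.ofReal (((q : ℝ × ℝ).2 - (q : ℝ × ℝ).1) ^ γ)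

variable {n : ℕ}

/-- The remainder `R^X_{s,t}(ω) = X_t(ω) − X_s(ω) − X'_s(ω)(W_t − W_s)` of a controlled
pair `(X, X')` over the driving path `W`. -/
def scrpRem (W : ℝ → (Fin n → ℝ)) {E : Type*} [NormedAddCommGroup E] [NormedSpace ℝ E]
    (X : ℝ → Ω → E) (X' : ℝ → Ω → ((Fin n → ℝ) →L[ℝ] E)) (s t : ℝ) : Ω → E :=
  fun ω => X t ω - X s ω - X' s ω (W t - W s)

/-- `‖E_• R^X‖_{θ;p} = sup_{0 ≤ s < t ≤ T} ‖E_s(R^X_{s,t})‖_{L^p} / (t−s)^θ`. -/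
def condRemLp (T : ℝ) (ℱ : Filtration ℝ m0) (μ : Measure Ω) (p θ : ℝ)
    (W : ℝ → (Fin n → ℝ)) {E : Type*} [NormedAddCommGroup E] [NormedSpace ℝ E]
    [CompleteSpace E]
    (X : ℝ → Ω → E) (X' : ℝ → Ω → ((Fin n → ℝ) →L[ℝ] E)) : ℝ≥0∞ :=
  ⨆ q : SPairs T,
    eLpNorm (μ[scrpRem W X X' (q : ℝ × ℝ).1 (q : ℝ × ℝ).2 | ℱ (q : ℝ × ℝ).1])
        (ENNReal.ofReal p) μ /
      ENNReal.ofReal (((q : ℝ × ℝ).2 - (q : ℝ × ℝ).1) ^ θ)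

/-- `(X, X')` is a stochastic controlled rough path in `𝐃_W^{γ,γ'}L_p(E)`: both
components are progressively measurable, `sup_t ‖X_t‖_p`, `‖δX‖_{γ;p}`,
`sup_t ‖X'_t‖_p`, `‖δX'‖_{γ';p}` and `‖E_• R^X‖_{γ+γ';p}` are all finite. -/
def MemSCRP (T : ℝ) (ℱ : Filtration ℝ m0) (μ : Measure Ω) (W : ℝ → (Fin n → ℝ))
    (γ γ' p : ℝ) {E : Type*} [NormedAddCommGroup E] [NormedSpace ℝ E] [CompleteSpace E]
    (X : ℝ → Ω → E) (X' : ℝ → Ω → ((Fin n → ℝ) →L[ℝ] E)) : Prop :=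
  ProgMeasOn T ℱ X ∧ ProgMeasOn T ℱ X' ∧
  supLp T μ p X < ⊤ ∧ deltaLp T μ γ p X < ⊤ ∧
  supLp T μ p X' < ⊤ ∧ deltaLp T μ γ' p X' < ⊤ ∧
  condRemLp T ℱ μ p (γ + γ') W X X' < ⊤

/-- The seminorm `‖(X,X')‖_{𝐃_W^{γ,γ'}L_p}`. -/
def scrpNorm (T : ℝ) (ℱ : Filtration ℝ m0) (μ : Measure Ω) (W : ℝ → (Fin n → ℝ))
    (γ γ' p : ℝ) {E : Type*} [NormedAddCommGroup E] [NormedSpace ℝ E] [CompleteSpace E]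
    (X : ℝ → Ω → E) (X' : ℝ → Ω → ((Fin n → ℝ) →L[ℝ] E)) : ℝ≥0∞ :=
  deltaLp T μ γ p X + supLp T μ p X' + deltaLp T μ γ' p X' +
    condRemLp T ℱ μ p (γ + γ') W X X'

/-- The distance `‖X, X'; X̄, X̄'‖_{W,W̄;γ,γ';p}` between a pair controlled by `W` and a
pair controlled by `W̄`. -/
def scrpDist (T : ℝ) (ℱ : Filtration ℝ m0) (μ : Measure Ω)
    (W Wb : ℝ → (Fin n → ℝ)) (γ γ' p : ℝ)
    {E : Type*} [NormedAddCommGroup E] [NormedSpace ℝ E] [CompleteSpace E]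
    (X : ℝ → Ω → E) (X' : ℝ → Ω → ((Fin n → ℝ) →L[ℝ] E))
    (Xb : ℝ → Ω → E) (Xb' : ℝ → Ω → ((Fin n → ℝ) →L[ℝ] E)) : ℝ≥0∞ :=
  supLp T μ p (fun t ω => X t ω - Xb t ω) +
  deltaLp T μ γ p (fun t ω => X t ω - Xb t ω) +
  supLp T μ p (fun t ω => X' t ω - Xb' t ω) +
  deltaLp T μ γ' p (fun t ω => X' t ω - Xb' t ω) +
  ⨆ q : SPairs T,
    eLpNorm (μ[fun ω => scrpRem W X X' (q : ℝ × ℝ).1 (q : ℝ × ℝ).2 ω -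
          scrpRem Wb Xb Xb' (q : ℝ × ℝ).1 (q : ℝ × ℝ).2 ω | ℱ (q : ℝ × ℝ).1])
        (ENNReal.ofReal p) μ /
      ENNReal.ofReal (((q : ℝ × ℝ).2 - (q : ℝ × ℝ).1) ^ (γ + γ'))

section SCRPAux

open MeasureTheory

variable {T : ℝ}

lemma genSup_pointwise {ι : Sort*} {N : ι → ℝ≥0∞} {D : ι → ℝ} {K : ℝ≥0∞}
    (h : (⨆ i, N i / ENNReal.ofReal (D i)) ≤ K) (hD : ∀ i, 0 < D i) (i : ι) :
    N i ≤ K * ENNReal.ofReal (D i) :=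
  (ENNReal.div_le_iff_le_mul (Or.inl (ENNReal.ofReal_pos.2 (hD i)).ne')
    (Or.inl ENNReal.ofReal_ne_top)).1
    ((le_iSup (fun i => N i / ENNReal.ofReal (D i)) i).trans h)

lemma genSup_le {ι : Sort*} {N : ι → ℝ≥0∞} {D : ι → ℝ} {K : ℝ≥0∞}
    (h : ∀ i, N i ≤ K * ENNReal.ofReal (D i)) :
    (⨆ i, N i / ENNReal.ofReal (D i)) ≤ K :=
  iSup_le fun i => ENNReal.div_le_of_le_mul (h i)

lemma interp_bound {N A B : ℝ≥0∞} {c γ lam η : ℝ} (hc : 0 < c)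
    (hγη : γ < η) (hel : η < lam)
    (hA : N ≤ A * ENNReal.ofReal (c ^ γ)) (hB : N ≤ B * ENNReal.ofReal (c ^ lam)) :
    N ≤ A ^ ((lam - η) / (lam - γ)) * B ^ ((η - γ) / (lam - γ)) *
      ENNReal.ofReal (c ^ η) := by
  have hgl : γ < lam := hγη.trans hel
  have hd : (0:ℝ) < lam - γ := by linarith
  have hdne : lam - γ ≠ 0 := hd.ne'
  set a := (lam - η) / (lam - γ) with ha_def
  set b := (η - γ) / (lam - γ) with hb_def
  have ha : 0 < a := div_pos (by linarith) hd
  have hb : 0 < b := div_pos (by linarith) hd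
  have hab : a + b = 1 := by
    rw [ha_def, hb_def, ← add_div, div_eq_one_iff_eq hdne]; ring
  have hexp : γ * a + lam * b = η := by
    rw [ha_def, hb_def]; field_simp; ring
  rcases eq_or_ne N 0 with hN | hN
  · rw [hN]; exact zero_le
  rcases eq_or_ne N ⊤ with hNt | hNt
  · have hA' : A = ⊤ := by
      rcases ENNReal.mul_eq_top.1 (top_le_iff.1 (hNt ▸ hA)) with h | h
      · exact absurd h.2 ENNReal.ofReal_ne_top
      · exact h.1
    have hB' : B = ⊤ := by
      rcases ENNReal.mul_eq_top.1 (top_le_iff.1 (hNt ▸ hB)) with h | h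
      · exact absurd h.2 ENNReal.ofReal_ne_top
      · exact h.1
    have h1 : ENNReal.ofReal (c ^ η) ≠ 0 :=
      (ENNReal.ofReal_pos.2 (Real.rpow_pos_of_pos hc η)).ne'
    rw [hA', hB', ENNReal.top_rpow_of_pos ha, ENNReal.top_rpow_of_pos hb,
      ENNReal.top_mul ENNReal.top_ne_zero, ENNReal.top_mul h1]
    exact le_top
  calc N = N ^ a * N ^ b := by
        rw [← ENNReal.rpow_add a b hN hNt, hab, ENNReal.rpow_one]
    _ ≤ (A * ENNReal.ofReal (c ^ γ)) ^ a * (B * ENNReal.ofReal (c ^ lam)) ^ b :=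
        mul_le_mul' (ENNReal.rpow_le_rpow hA ha.le) (ENNReal.rpow_le_rpow hB hb.le)
    _ = A ^ a * B ^ b * ENNReal.ofReal (c ^ η) := by
        rw [ENNReal.mul_rpow_of_nonneg _ _ ha.le, ENNReal.mul_rpow_of_nonneg _ _ hb.le,
          ENNReal.ofReal_rpow_of_pos (Real.rpow_pos_of_pos hc γ),
          ENNReal.ofReal_rpow_of_pos (Real.rpow_pos_of_pos hc lam),
          ← Real.rpow_mul hc.le, ← Real.rpow_mul hc.le, mul_mul_mul_comm,
          ← ENNReal.ofReal_mul (Real.rpow_nonneg hc.le _), ← Real.rpow_add hc, hexp]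

lemma upgrade_bound {N B : ℝ≥0∞} {c T lam η : ℝ} (hc : 0 < c) (hcT : c ≤ T)
    (hη : η ≤ lam) (hB : N ≤ B * ENNReal.ofReal (c ^ lam)) :
    N ≤ B * ENNReal.ofReal (T ^ (lam - η)) * ENNReal.ofReal (c ^ η) := by
  have h1 : c ^ lam = c ^ (lam - η) * c ^ η := by
    rw [← Real.rpow_add hc]; congr 1; ring
  have h2 : c ^ (lam - η) ≤ T ^ (lam - η) :=
    Real.rpow_le_rpow hc.le hcT (by linarith)
  calc N ≤ B * ENNReal.ofReal (c ^ lam) := hB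
    _ = B * (ENNReal.ofReal (c ^ (lam - η)) * ENNReal.ofReal (c ^ η)) := by
        rw [h1, ENNReal.ofReal_mul (Real.rpow_nonneg hc.le _)]
    _ ≤ B * (ENNReal.ofReal (T ^ (lam - η)) * ENNReal.ofReal (c ^ η)) := by
        exact mul_le_mul' le_rfl (mul_le_mul' (ENNReal.ofReal_le_ofReal h2) le_rfl)
    _ = B * ENNReal.ofReal (T ^ (lam - η)) * ENNReal.ofReal (c ^ η) :=
        (mul_assoc _ _ _).symm

lemma le_of_eventually_le_add {c C : ℝ≥0∞} {g : ℕ → ℝ≥0∞}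
    (hg : Tendsto g atTop (𝓝 0)) (h : ∀ᶠ k in atTop, c ≤ C + g k) : c ≤ C := by
  have ht : Tendsto (fun k => C + g k) atTop (𝓝 C) := by
    simpa using tendsto_const_nhds.add hg
  exact ge_of_tendsto ht h

lemma ProgMeasOn.sm {ℱ : Filtration ℝ m0} {E : Type*} [TopologicalSpace E]
    {X : ℝ → Ω → E} (h : ProgMeasOn T ℱ X) {u : ℝ} (hu : u ∈ Icc (0:ℝ) T) :
    StronglyMeasurable (X u) := by
  have h2 := h u hu
  have hmeas : @Measurable Ω (Icc (0:ℝ) u × Ω) (ℱ u)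
      ((inferInstanceAs (MeasurableSpace (Icc (0:ℝ) u)) : MeasurableSpace (Icc (0:ℝ) u)).prod (ℱ u))
      (fun ω : Ω => ((⟨u, hu.1, le_refl u⟩ : Icc (0:ℝ) u), ω)) :=
    measurable_const.prodMk measurable_id
  exact (h2.comp_measurable hmeas).mono (ℱ.le u)

lemma integrable_of_supLp {p : ℝ} (hp : 1 ≤ p) {ℱ : Filtration ℝ m0} {μ : Measure Ω}
    [IsFiniteMeasure μ] {E : Type*} [NormedAddCommGroup E]
    {X : ℝ → Ω → E} (hX : ProgMeasOn T ℱ X) (hS : supLp T μ p X < ⊤)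
    {u : ℝ} (hu : u ∈ Icc (0:ℝ) T) : Integrable (X u) μ := by
  have hm : MemLp (X u) (ENNReal.ofReal p) μ :=
    ⟨(hX.sm hu).aestronglyMeasurable,
      lt_of_le_of_lt (le_iSup (fun t : Icc (0:ℝ) T =>
        eLpNorm (X (t : ℝ)) (ENNReal.ofReal p) μ) ⟨u, hu⟩) hS⟩
  exact hm.integrable (ENNReal.one_le_ofReal.2 hp)

lemma integrable_scrpRem {p : ℝ} (hp : 1 ≤ p) {ℱ : Filtration ℝ m0} {μ : Measure Ω}
    [IsFiniteMeasure μ] {W : ℝ → (Fin n → ℝ)} {E : Type*} [NormedAddCommGroup E]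
    [NormedSpace ℝ E] [CompleteSpace E] {X : ℝ → Ω → E}
    {X' : ℝ → Ω → ((Fin n → ℝ) →L[ℝ] E)}
    (hX : ProgMeasOn T ℱ X) (hX' : ProgMeasOn T ℱ X')
    (hS : supLp T μ p X < ⊤) (hS' : supLp T μ p X' < ⊤)
    {s t : ℝ} (hs : s ∈ Icc (0:ℝ) T) (ht : t ∈ Icc (0:ℝ) T) :
    Integrable (scrpRem W X X' s t) μ := by
  have h1 : Integrable (X t) μ := integrable_of_supLp hp hX hS ht
  have h2 : Integrable (X s) μ := integrable_of_supLp hp hX hS hs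
  have h3' : Integrable (X' s) μ := integrable_of_supLp hp hX' hS' hs
  have hsm : StronglyMeasurable (fun ω => X' s ω (W t - W s)) :=
    (ContinuousLinearMap.apply ℝ E (W t - W s)).continuous.comp_stronglyMeasurable
      (hX'.sm hs)
  have h3 : Integrable (fun ω => X' s ω (W t - W s)) μ := by
    refine (h3'.norm.mul_const ‖W t - W s‖).mono' hsm.aestronglyMeasurable ?_
    filter_upwards with ω
    exact (X' s ω).le_opNorm (W t - W s)
  exact (h1.sub h2).sub h3

lemma eLpNorm_condexp_sub_le {μ : Measure Ω} {m : MeasurableSpace Ω}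
    (hm : m ≤ m0) {E : Type*} [NormedAddCommGroup E] [NormedSpace ℝ E]
    [CompleteSpace E] {f g : Ω → E} (hf : Integrable f μ) (hg : Integrable g μ)
    {q : ℝ≥0∞} (hq : 1 ≤ q) :
    eLpNorm (μ[f - g|m]) q μ ≤ eLpNorm (μ[f|m]) q μ + eLpNorm (μ[g|m]) q μ := by
  rw [eLpNorm_congr_ae (condExp_sub (m := m) hf hg)]
  exact eLpNorm_sub_le (stronglyMeasurable_condExp.mono hm).aestronglyMeasurable
    (stronglyMeasurable_condExp.mono hm).aestronglyMeasurable hq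

lemma eLpNorm_condexp_le_add {μ : Measure Ω} {m : MeasurableSpace Ω}
    (hm : m ≤ m0) {E : Type*} [NormedAddCommGroup E] [NormedSpace ℝ E]
    [CompleteSpace E] {f g : Ω → E} (hf : Integrable f μ) (hg : Integrable g μ)
    {q : ℝ≥0∞} (hq : 1 ≤ q) :
    eLpNorm (μ[g|m]) q μ ≤ eLpNorm (μ[f|m]) q μ + eLpNorm (μ[f - g|m]) q μ := by
  have h := condExp_sub (m := m) hf (hf.sub hg)
  have h2 : f - (f - g) = g := sub_sub_cancel f g
  rw [h2] at h
  rw [eLpNorm_congr_ae h]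
  exact eLpNorm_sub_le (stronglyMeasurable_condExp.mono hm).aestronglyMeasurable
    (stronglyMeasurable_condExp.mono hm).aestronglyMeasurable hq

end SCRPAux
/-- **Interpolation for stochastic controlled rough paths.** Fix `T > 0`, a complete
filtered probability space, `p ∈ [2,∞)` and exponents `γ < λ`, `γ' < λ'` in `[0,1]`.
For each `k ≥ 0` let `(X^{(k)}, (X^{(k)})')` be a stochastic controlled rough path over
the path `W^{(k)}`. Assume: (i) for `k ≥ 1` they lie in `𝐃_{W^{(k)}}^{λ,λ'}L_p(ℝ^d)`,
with uniformly bounded seminorms; (ii) `(X^{(0)}, (X^{(0)})') ∈ 𝐃_{W^{(0)}}^{γ,γ'}L_p`;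
(iii) the distance `‖X^{(k)}, (X^{(k)})'; X^{(0)}, (X^{(0)})'‖_{W^{(k)},W^{(0)};γ,γ';p}`
tends to `0`. Then for all `η ∈ (γ,λ)`, `η' ∈ (γ',λ')`, the limit pair lies in
`𝐃_{W^{(0)}}^{η,η'}L_p(ℝ^d)` and the distance at exponents `(η,η')` also tends to `0`. -/
theorem scrp_interpolation
    {n d : ℕ} (T : ℝ) (hT : 0 < T)
    (ℱ : Filtration ℝ m0) (μ : Measure Ω) [IsProbabilityMeasure μ]
    (hcompl : ∀ t : ℝ, ∀ s : Set Ω, μ s = 0 → MeasurableSet[ℱ t] s)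
    (p γ γ' lam lam' : ℝ) (hp : 2 ≤ p)
    (hγ0 : 0 ≤ γ) (hγ'0 : 0 ≤ γ') (hlam1 : lam ≤ 1) (hlam'1 : lam' ≤ 1)
    (hγlam : γ < lam) (hγ'lam' : γ' < lam')
    (W : ℕ → ℝ → (Fin n → ℝ))
    (X : ℕ → ℝ → Ω → (Fin d → ℝ))
    (X' : ℕ → ℝ → Ω → ((Fin n → ℝ) →L[ℝ] (Fin d → ℝ)))
    (h1 : ∀ k : ℕ, 1 ≤ k → MemSCRP T ℱ μ (W k) lam lam' p (X k) (X' k))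
    (h1bdd : (⨆ k : {k : ℕ // 1 ≤ k},
      scrpNorm T ℱ μ (W k) lam lam' p (X k) (X' k)) < ⊤)
    (h2 : MemSCRP T ℱ μ (W 0) γ γ' p (X 0) (X' 0))
    (h3 : Tendsto
      (fun k => scrpDist T ℱ μ (W k) (W 0) γ γ' p (X k) (X' k) (X 0) (X' 0))
      atTop (𝓝 0)) :
    ∀ η η' : ℝ, γ < η → η < lam → γ' < η' → η' < lam' →
      MemSCRP T ℱ μ (W 0) η η' p (X 0) (X' 0) ∧
      Tendsto
        (fun k => scrpDist T ℱ μ (W k) (W 0) η η' p (X k) (X' k) (X 0) (X' 0))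
        atTop (𝓝 0) := by
  intro η η' hγη hηl hγ'η' hη'l
  have hp1 : (1:ℝ) ≤ p := by linarith
  have hq1 : (1:ℝ≥0∞) ≤ ENNReal.ofReal p := ENNReal.one_le_ofReal.2 hp1
  obtain ⟨hPM, hPM', hS0, hD0, hS0', hD0', hR0⟩ := h2
  set M := ⨆ k : {k : ℕ // 1 ≤ k}, scrpNorm T ℱ μ (W k) lam lam' p (X k) (X' k)
    with hMdef
  have hMt : M ≠ ⊤ := h1bdd.ne
  have hMMt : M + M ≠ ⊤ := ENNReal.add_ne_top.2 ⟨hMt, hMt⟩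
  have hcq : ∀ q : SPairs T, 0 < (q : ℝ × ℝ).2 - (q : ℝ × ℝ).1 :=
    fun q => sub_pos.2 q.2.2.1
  have hcqT : ∀ q : SPairs T, (q : ℝ × ℝ).2 - (q : ℝ × ℝ).1 ≤ T := fun q => by
    obtain ⟨ha', hb', hc'⟩ := q.2
    linarith
  have hsI : ∀ q : SPairs T, (q : ℝ × ℝ).1 ∈ Icc (0:ℝ) T := fun q =>
    ⟨q.2.1, q.2.2.1.le.trans q.2.2.2⟩
  have htI : ∀ q : SPairs T, (q : ℝ × ℝ).2 ∈ Icc (0:ℝ) T := fun q =>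
    ⟨q.2.1.trans q.2.2.1.le, q.2.2.2⟩
  have hD : ∀ (e : ℝ), ∀ q : SPairs T, 0 < ((q : ℝ × ℝ).2 - (q : ℝ × ℝ).1) ^ e :=
    fun e q => Real.rpow_pos_of_pos (hcq q) e
  -- uniform bounds on the components of the seminorms for k ≥ 1
  have hcomp : ∀ k : ℕ, 1 ≤ k →
      deltaLp T μ lam p (X k) ≤ M ∧ supLp T μ p (X' k) ≤ M ∧
      deltaLp T μ lam' p (X' k) ≤ M ∧
      condRemLp T ℱ μ p (lam + lam') (W k) (X k) (X' k) ≤ M := by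
    intro k hk
    have hle : scrpNorm T ℱ μ (W k) lam lam' p (X k) (X' k) ≤ M :=
      le_iSup (fun j : {k : ℕ // 1 ≤ k} =>
        scrpNorm T ℱ μ (W j) lam lam' p (X j) (X' j)) ⟨k, hk⟩
    unfold scrpNorm at hle
    exact ⟨le_trans ((le_self_add.trans le_self_add).trans le_self_add) hle,
      le_trans ((le_add_self.trans le_self_add).trans le_self_add) hle,
      le_trans (le_add_self.trans le_self_add) hle,
      le_trans le_add_self hle⟩
  -- bounds of the components of the γ-distance by the distance
  have hg1 : ∀ k : ℕ, supLp T μ p (fun t ω => X k t ω - X 0 t ω) ≤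
      scrpDist T ℱ μ (W k) (W 0) γ γ' p (X k) (X' k) (X 0) (X' 0) := by
    intro k; unfold scrpDist
    exact ((le_self_add.trans le_self_add).trans le_self_add).trans le_self_add
  have hg2 : ∀ k : ℕ, deltaLp T μ γ p (fun t ω => X k t ω - X 0 t ω) ≤
      scrpDist T ℱ μ (W k) (W 0) γ γ' p (X k) (X' k) (X 0) (X' 0) := by
    intro k; unfold scrpDist
    exact ((le_add_self.trans le_self_add).trans le_self_add).trans le_self_add
  have hg3 : ∀ k : ℕ, supLp T μ p (fun t ω => X' k t ω - X' 0 t ω) ≤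
      scrpDist T ℱ μ (W k) (W 0) γ γ' p (X k) (X' k) (X 0) (X' 0) := by
    intro k; unfold scrpDist
    exact ((le_add_self.trans le_self_add).trans le_self_add)
  have hg4 : ∀ k : ℕ, deltaLp T μ γ' p (fun t ω => X' k t ω - X' 0 t ω) ≤
      scrpDist T ℱ μ (W k) (W 0) γ γ' p (X k) (X' k) (X 0) (X' 0) := by
    intro k; unfold scrpDist
    exact le_add_self.trans le_self_add
  have hg5 : ∀ k : ℕ, (⨆ q : SPairs T,
      eLpNorm (μ[fun ω => scrpRem (W k) (X k) (X' k) (q : ℝ × ℝ).1 (q : ℝ × ℝ).2 ω -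
          scrpRem (W 0) (X 0) (X' 0) (q : ℝ × ℝ).1 (q : ℝ × ℝ).2 ω | ℱ (q : ℝ × ℝ).1])
        (ENNReal.ofReal p) μ /
        ENNReal.ofReal (((q : ℝ × ℝ).2 - (q : ℝ × ℝ).1) ^ (γ + γ'))) ≤
      scrpDist T ℱ μ (W k) (W 0) γ γ' p (X k) (X' k) (X 0) (X' 0) := by
    intro k; unfold scrpDist
    exact le_add_self
  -- limit bounds for the limit pair at the large exponents, pointwise in q
  have P1 : ∀ q : SPairs T,
      eLpNorm (fun ω => X 0 (q : ℝ × ℝ).2 ω - X 0 (q : ℝ × ℝ).1 ω)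
        (ENNReal.ofReal p) μ ≤
        M * ENNReal.ofReal (((q : ℝ × ℝ).2 - (q : ℝ × ℝ).1) ^ lam) := by
    intro q
    refine le_of_eventually_le_add
      (g := fun k => scrpDist T ℱ μ (W k) (W 0) γ γ' p (X k) (X' k) (X 0) (X' 0) *
        ENNReal.ofReal (((q : ℝ × ℝ).2 - (q : ℝ × ℝ).1) ^ γ)) ?_ ?_
    · simpa using ENNReal.Tendsto.mul_const h3 (Or.inr ENNReal.ofReal_ne_top)
    · filter_upwards [eventually_ge_atTop 1] with k hk
      have e1 : (fun ω => X 0 (q : ℝ × ℝ).2 ω - X 0 (q : ℝ × ℝ).1 ω) =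
          (fun ω => X k (q : ℝ × ℝ).2 ω - X k (q : ℝ × ℝ).1 ω) -
          (fun ω => (X k (q : ℝ × ℝ).2 ω - X 0 (q : ℝ × ℝ).2 ω) -
            (X k (q : ℝ × ℝ).1 ω - X 0 (q : ℝ × ℝ).1 ω)) := by
        funext ω; simp only [Pi.sub_apply]; abel
      rw [e1]
      refine le_trans (eLpNorm_sub_le ?_ ?_ hq1) (add_le_add ?_ ?_)
      · exact (((h1 k hk).1.sm (htI q)).sub
          ((h1 k hk).1.sm (hsI q))).aestronglyMeasurable
      · exact ((((h1 k hk).1.sm (htI q)).sub (hPM.sm (htI q))).sub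
          (((h1 k hk).1.sm (hsI q)).sub (hPM.sm (hsI q)))).aestronglyMeasurable
      · exact genSup_pointwise (hcomp k hk).1 (hD lam) q
      · exact genSup_pointwise (hg2 k) (hD γ) q
  have P2 : ∀ q : SPairs T,
      eLpNorm (fun ω => X' 0 (q : ℝ × ℝ).2 ω - X' 0 (q : ℝ × ℝ).1 ω)
        (ENNReal.ofReal p) μ ≤
        M * ENNReal.ofReal (((q : ℝ × ℝ).2 - (q : ℝ × ℝ).1) ^ lam') := by
    intro q
    refine le_of_eventually_le_add
      (g := fun k => scrpDist T ℱ μ (W k) (W 0) γ γ' p (X k) (X' k) (X 0) (X' 0) *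
        ENNReal.ofReal (((q : ℝ × ℝ).2 - (q : ℝ × ℝ).1) ^ γ')) ?_ ?_
    · simpa using ENNReal.Tendsto.mul_const h3 (Or.inr ENNReal.ofReal_ne_top)
    · filter_upwards [eventually_ge_atTop 1] with k hk
      have e1 : (fun ω => X' 0 (q : ℝ × ℝ).2 ω - X' 0 (q : ℝ × ℝ).1 ω) =
          (fun ω => X' k (q : ℝ × ℝ).2 ω - X' k (q : ℝ × ℝ).1 ω) -
          (fun ω => (X' k (q : ℝ × ℝ).2 ω - X' 0 (q : ℝ × ℝ).2 ω) -
            (X' k (q : ℝ × ℝ).1 ω - X' 0 (q : ℝ × ℝ).1 ω)) := by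
        funext ω; simp only [Pi.sub_apply]; abel
      rw [e1]
      refine le_trans (eLpNorm_sub_le ?_ ?_ hq1) (add_le_add ?_ ?_)
      · exact (((h1 k hk).2.1.sm (htI q)).sub
          ((h1 k hk).2.1.sm (hsI q))).aestronglyMeasurable
      · exact ((((h1 k hk).2.1.sm (htI q)).sub (hPM'.sm (htI q))).sub
          (((h1 k hk).2.1.sm (hsI q)).sub (hPM'.sm (hsI q)))).aestronglyMeasurable
      · exact genSup_pointwise (hcomp k hk).2.2.1 (hD lam') q
      · exact genSup_pointwise (hg4 k) (hD γ') q
  have P3 : ∀ q : SPairs T,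
      eLpNorm (μ[scrpRem (W 0) (X 0) (X' 0) (q : ℝ × ℝ).1 (q : ℝ × ℝ).2 |
          ℱ (q : ℝ × ℝ).1]) (ENNReal.ofReal p) μ ≤
        M * ENNReal.ofReal (((q : ℝ × ℝ).2 - (q : ℝ × ℝ).1) ^ (lam + lam')) := by
    intro q
    refine le_of_eventually_le_add
      (g := fun k => scrpDist T ℱ μ (W k) (W 0) γ γ' p (X k) (X' k) (X 0) (X' 0) *
        ENNReal.ofReal (((q : ℝ × ℝ).2 - (q : ℝ × ℝ).1) ^ (γ + γ'))) ?_ ?_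
    · simpa using ENNReal.Tendsto.mul_const h3 (Or.inr ENNReal.ofReal_ne_top)
    · filter_upwards [eventually_ge_atTop 1] with k hk
      obtain ⟨PMk, PMk', hSk, _, hSk', _, _⟩ := h1 k hk
      have hRk : Integrable
          (scrpRem (W k) (X k) (X' k) (q : ℝ × ℝ).1 (q : ℝ × ℝ).2) μ :=
        integrable_scrpRem hp1 PMk PMk' hSk hSk' (hsI q) (htI q)
      have hR0' : Integrable
          (scrpRem (W 0) (X 0) (X' 0) (q : ℝ × ℝ).1 (q : ℝ × ℝ).2) μ :=
        integrable_scrpRem hp1 hPM hPM' hS0 hS0' (hsI q) (htI q)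
      refine le_trans (eLpNorm_condexp_le_add (ℱ.le (q : ℝ × ℝ).1) hRk hR0' hq1)
        (add_le_add ?_ ?_)
      · exact genSup_pointwise (hcomp k hk).2.2.2 (hD (lam + lam')) q
      · exact genSup_pointwise (hg5 k) (hD (γ + γ')) q
  -- membership of the limit pair at the intermediate exponents
  have mem : MemSCRP T ℱ μ (W 0) η η' p (X 0) (X' 0) := by
    refine ⟨hPM, hPM', hS0, ?_, hS0', ?_, ?_⟩
    · have hb : deltaLp T μ η p (X 0) ≤ M * ENNReal.ofReal (T ^ (lam - η)) :=
        genSup_le fun q => upgrade_bound (hcq q) (hcqT q) hηl.le (P1 q)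
      exact lt_of_le_of_lt hb (ENNReal.mul_lt_top hMt.lt_top ENNReal.ofReal_lt_top)
    · have hb : deltaLp T μ η' p (X' 0) ≤ M * ENNReal.ofReal (T ^ (lam' - η')) :=
        genSup_le fun q => upgrade_bound (hcq q) (hcqT q) hη'l.le (P2 q)
      exact lt_of_le_of_lt hb (ENNReal.mul_lt_top hMt.lt_top ENNReal.ofReal_lt_top)
    · have hb : condRemLp T ℱ μ p (η + η') (W 0) (X 0) (X' 0) ≤
          M * ENNReal.ofReal (T ^ (lam + lam' - (η + η'))) :=
        genSup_le fun q => upgrade_bound (hcq q) (hcqT q) (by linarith) (P3 q)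
      exact lt_of_le_of_lt hb (ENNReal.mul_lt_top hMt.lt_top ENNReal.ofReal_lt_top)
  refine ⟨mem, ?_⟩
  -- convergence at the intermediate exponents
  have haux : ∀ a b : ℝ, 0 < a → 0 < b →
      Tendsto (fun k =>
        (scrpDist T ℱ μ (W k) (W 0) γ γ' p (X k) (X' k) (X 0) (X' 0)) ^ a *
          (M + M) ^ b) atTop (𝓝 0) := by
    intro a b ha hb
    have h1' : Tendsto (fun k =>
        (scrpDist T ℱ μ (W k) (W 0) γ γ' p (X k) (X' k) (X 0) (X' 0)) ^ a)
        atTop (𝓝 0) := by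
      have hc := (ENNReal.continuous_rpow_const (y := a)).tendsto 0
      rw [ENNReal.zero_rpow_of_pos ha] at hc
      exact hc.comp h3
    have h2' : (M + M) ^ b ≠ ⊤ := ENNReal.rpow_ne_top_of_nonneg hb.le hMMt
    simpa using ENNReal.Tendsto.mul_const h1' (Or.inr h2')
  have hF : Tendsto (fun k =>
      scrpDist T ℱ μ (W k) (W 0) γ γ' p (X k) (X' k) (X 0) (X' 0) +
      (scrpDist T ℱ μ (W k) (W 0) γ γ' p (X k) (X' k) (X 0) (X' 0)) ^
          ((lam - η) / (lam - γ)) * (M + M) ^ ((η - γ) / (lam - γ)) +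
      scrpDist T ℱ μ (W k) (W 0) γ γ' p (X k) (X' k) (X 0) (X' 0) +
      (scrpDist T ℱ μ (W k) (W 0) γ γ' p (X k) (X' k) (X 0) (X' 0)) ^
          ((lam' - η') / (lam' - γ')) * (M + M) ^ ((η' - γ') / (lam' - γ')) +
      (scrpDist T ℱ μ (W k) (W 0) γ γ' p (X k) (X' k) (X 0) (X' 0)) ^
          ((lam + lam' - (η + η')) / (lam + lam' - (γ + γ'))) *
        (M + M) ^ ((η + η' - (γ + γ')) / (lam + lam' - (γ + γ')))) atTop (𝓝 0) := by
    have := (((h3.add (haux ((lam - η) / (lam - γ)) ((η - γ) / (lam - γ))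
        (div_pos (by linarith) (by linarith))
        (div_pos (by linarith) (by linarith)))).add h3).add
      (haux ((lam' - η') / (lam' - γ')) ((η' - γ') / (lam' - γ'))
        (div_pos (by linarith) (by linarith))
        (div_pos (by linarith) (by linarith)))).add
      (haux ((lam + lam' - (η + η')) / (lam + lam' - (γ + γ')))
        ((η + η' - (γ + γ')) / (lam + lam' - (γ + γ')))
        (div_pos (by linarith) (by linarith))
        (div_pos (by linarith) (by linarith)))
    simpa using this
  refine tendsto_of_tendsto_of_tendsto_of_le_of_le' tendsto_const_nhds hF
    (Eventually.of_forall fun k => zero_le) ?_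
  filter_upwards [eventually_ge_atTop 1] with k hk
  obtain ⟨PMk, PMk', hSk, _, hSk', _, _⟩ := h1 k hk
  -- λ-level bounds for the differences, pointwise in q
  have hT2b : ∀ q : SPairs T,
      eLpNorm (fun ω => X k (q : ℝ × ℝ).2 ω - X 0 (q : ℝ × ℝ).2 ω -
          (X k (q : ℝ × ℝ).1 ω - X 0 (q : ℝ × ℝ).1 ω)) (ENNReal.ofReal p) μ ≤
        (M + M) * ENNReal.ofReal (((q : ℝ × ℝ).2 - (q : ℝ × ℝ).1) ^ lam) := by
    intro q
    have e1 : (fun ω => X k (q : ℝ × ℝ).2 ω - X 0 (q : ℝ × ℝ).2 ω -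
          (X k (q : ℝ × ℝ).1 ω - X 0 (q : ℝ × ℝ).1 ω)) =
        (fun ω => X k (q : ℝ × ℝ).2 ω - X k (q : ℝ × ℝ).1 ω) -
          (fun ω => X 0 (q : ℝ × ℝ).2 ω - X 0 (q : ℝ × ℝ).1 ω) := by
      funext ω; simp only [Pi.sub_apply]; abel
    rw [e1, add_mul]
    refine le_trans (eLpNorm_sub_le ?_ ?_ hq1) (add_le_add ?_ ?_)
    · exact ((PMk.sm (htI q)).sub (PMk.sm (hsI q))).aestronglyMeasurable
    · exact ((hPM.sm (htI q)).sub (hPM.sm (hsI q))).aestronglyMeasurable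
    · exact genSup_pointwise (hcomp k hk).1 (hD lam) q
    · exact P1 q
  have hT4b : ∀ q : SPairs T,
      eLpNorm (fun ω => X' k (q : ℝ × ℝ).2 ω - X' 0 (q : ℝ × ℝ).2 ω -
          (X' k (q : ℝ × ℝ).1 ω - X' 0 (q : ℝ × ℝ).1 ω)) (ENNReal.ofReal p) μ ≤
        (M + M) * ENNReal.ofReal (((q : ℝ × ℝ).2 - (q : ℝ × ℝ).1) ^ lam') := by
    intro q
    have e1 : (fun ω => X' k (q : ℝ × ℝ).2 ω - X' 0 (q : ℝ × ℝ).2 ω -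
          (X' k (q : ℝ × ℝ).1 ω - X' 0 (q : ℝ × ℝ).1 ω)) =
        (fun ω => X' k (q : ℝ × ℝ).2 ω - X' k (q : ℝ × ℝ).1 ω) -
          (fun ω => X' 0 (q : ℝ × ℝ).2 ω - X' 0 (q : ℝ × ℝ).1 ω) := by
      funext ω; simp only [Pi.sub_apply]; abel
    rw [e1, add_mul]
    refine le_trans (eLpNorm_sub_le ?_ ?_ hq1) (add_le_add ?_ ?_)
    · exact ((PMk'.sm (htI q)).sub (PMk'.sm (hsI q))).aestronglyMeasurable
    · exact ((hPM'.sm (htI q)).sub (hPM'.sm (hsI q))).aestronglyMeasurable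
    · exact genSup_pointwise (hcomp k hk).2.2.1 (hD lam') q
    · exact P2 q
  have hT5b : ∀ q : SPairs T,
      eLpNorm (μ[scrpRem (W k) (X k) (X' k) (q : ℝ × ℝ).1 (q : ℝ × ℝ).2 -
          scrpRem (W 0) (X 0) (X' 0) (q : ℝ × ℝ).1 (q : ℝ × ℝ).2 | ℱ (q : ℝ × ℝ).1])
        (ENNReal.ofReal p) μ ≤
        (M + M) * ENNReal.ofReal (((q : ℝ × ℝ).2 - (q : ℝ × ℝ).1) ^ (lam + lam')) := by
    intro q
    have hRk : Integrable
        (scrpRem (W k) (X k) (X' k) (q : ℝ × ℝ).1 (q : ℝ × ℝ).2) μ :=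
      integrable_scrpRem hp1 PMk PMk' hSk hSk' (hsI q) (htI q)
    have hR0' : Integrable
        (scrpRem (W 0) (X 0) (X' 0) (q : ℝ × ℝ).1 (q : ℝ × ℝ).2) μ :=
      integrable_scrpRem hp1 hPM hPM' hS0 hS0' (hsI q) (htI q)
    rw [add_mul]
    refine le_trans (eLpNorm_condexp_sub_le (ℱ.le (q : ℝ × ℝ).1) hRk hR0' hq1)
      (add_le_add ?_ ?_)
    · exact genSup_pointwise (hcomp k hk).2.2.2 (hD (lam + lam')) q
    · exact P3 q
  unfold scrpDist
  refine add_le_add (add_le_add (add_le_add (add_le_add ?_ ?_) ?_) ?_) ?_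
  · exact hg1 k
  · refine genSup_le fun q => interp_bound (hcq q) hγη hηl
      (genSup_pointwise (hg2 k) (hD γ) q) (hT2b q)
  · exact hg3 k
  · refine genSup_le fun q => interp_bound (hcq q) hγ'η' hη'l
      (genSup_pointwise (hg4 k) (hD γ') q) (hT4b q)
  · refine genSup_le fun q => interp_bound (hcq q) (by linarith) (by linarith)
      (genSup_pointwise (hg5 k) (hD (γ + γ')) q) (hT5b q)
end
end

section
/- Let V and V̄ be normed real vector spaces with V finite-dimensional, let g : V → V̄ be twice continuously (Fréchet) differentiable, and suppose there exist K > 0 and m ≥ 1 such that ‖Dg(x)‖ + ‖D²g(x)‖ ≤ K(1 + ‖x‖)^m for every x ∈ V. Then for all a, b, c, d ∈ V: ‖g(a) − g(b) − g(c) + g(d)‖ ≤ K (1 + ‖a‖ + ‖b‖ + ‖c‖ + ‖d‖)^m · ( (‖a−c‖ + ‖b−d‖) ‖c−d‖ + ‖a − b − c + d‖ ). -/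
/-- **Elementary estimate for functions of polynomial growth.** Let `g : V → W` be twice
continuously Fréchet differentiable between normed real vector spaces (`V` finite
dimensional), with `‖Dg(x)‖ + ‖D²g(x)‖ ≤ K(1 + ‖x‖)^m` for all `x` (for some `K > 0`,
`m ≥ 1`), where `D²g(x)` is normed as a bilinear map. Then for all `a b c d : V`,
`‖g a − g b − g c + g d‖ ≤ K (1 + ‖a‖ + ‖b‖ + ‖c‖ + ‖d‖)^m
  ((‖a−c‖ + ‖b−d‖)‖c−d‖ + ‖a − b − c + d‖)`. -/
theorem polynomial_growth_second_difference_estimate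
    {V W : Type*} [NormedAddCommGroup V] [NormedSpace ℝ V] [FiniteDimensional ℝ V]
    [NormedAddCommGroup W] [NormedSpace ℝ W]
    (g : V → W) (hg : ContDiff ℝ 2 g)
    (K m : ℝ) (hK : 0 < K) (hm : 1 ≤ m)
    (hbd : ∀ x : V, ‖fderiv ℝ g x‖ + ‖iteratedFDeriv ℝ 2 g x‖ ≤ K * (1 + ‖x‖) ^ m) :
    ∀ a b c d : V,
      ‖g a - g b - g c + g d‖ ≤
        K * (1 + ‖a‖ + ‖b‖ + ‖c‖ + ‖d‖) ^ m *
          ((‖a - c‖ + ‖b - d‖) * ‖c - d‖ + ‖a - b - c + d‖) := by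
  intro a b c d
  have hdg : Differentiable ℝ g := hg.differentiable two_ne_zero
  have hdg2 : ContDiff ℝ 1 (fderiv ℝ g) := hg.fderiv_right (by norm_num)
  set S : ℝ := ‖a‖ + ‖b‖ + ‖c‖ + ‖d‖ with hSdef
  have hS0 : 0 ≤ S := by positivity
  set M : ℝ := K * (1 + S) ^ m with hMdef
  have hM0 : 0 ≤ M := by positivity
  -- bound on the ball of radius S
  have key : ∀ x : V, ‖x‖ ≤ S →
      ‖fderiv ℝ g x‖ ≤ M ∧ ‖iteratedFDeriv ℝ 2 g x‖ ≤ M := by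
    intro x hx
    have h1 : K * (1 + ‖x‖) ^ m ≤ M := by
      apply mul_le_mul_of_nonneg_left _ hK.le
      exact Real.rpow_le_rpow (by positivity) (by linarith) (by linarith)
    have h2 := hbd x
    constructor <;>
      nlinarith [norm_nonneg (fderiv ℝ g x), norm_nonneg (iteratedFDeriv ℝ 2 g x)]
  -- norm of second derivative as fderiv of fderiv
  have hnorm2 : ∀ x : V, ‖fderiv ℝ (fderiv ℝ g) x‖ = ‖iteratedFDeriv ℝ 2 g x‖ := by
    intro x
    rw [show ‖fderiv ℝ (fderiv ℝ g) x‖ = ‖iteratedFDeriv ℝ 0 (fderiv ℝ (fderiv ℝ g)) x‖ from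
        by rw [norm_iteratedFDeriv_zero],
      norm_iteratedFDeriv_fderiv, norm_iteratedFDeriv_fderiv]
  -- Lipschitz bound for fderiv g on the ball
  have lip : ∀ x y : V, ‖x‖ ≤ S → ‖y‖ ≤ S →
      ‖fderiv ℝ g y - fderiv ℝ g x‖ ≤ M * ‖y - x‖ := by
    intro x y hx hy
    refine (convex_closedBall (0 : V) S).norm_image_sub_le_of_norm_fderiv_le
      (fun z _ => (hdg2.differentiable one_ne_zero).differentiableAt)
      (fun z hz => ?_) (mem_closedBall_zero_iff.mpr hx) (mem_closedBall_zero_iff.mpr hy)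
    rw [hnorm2]
    exact (key z (mem_closedBall_zero_iff.mp hz)).2
  -- Step 1: mean value estimate for g between b+c-d and a
  have e1 : ‖g a - g (b + c - d)‖ ≤ M * ‖a - (b + c - d)‖ := by
    refine (convex_closedBall (0 : V) S).norm_image_sub_le_of_norm_fderiv_le
      (fun z _ => (hdg z)) (fun z hz => (key z (mem_closedBall_zero_iff.mp hz)).1)
      (mem_closedBall_zero_iff.mpr ?_) (mem_closedBall_zero_iff.mpr ?_)
    · calc ‖b + c - d‖ ≤ ‖b‖ + ‖c‖ + ‖d‖ := (norm_sub_le _ _).trans (by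
        gcongr; exact norm_add_le _ _)
      _ ≤ S := by rw [hSdef]; linarith [norm_nonneg a]
    · rw [hSdef]; linarith [norm_nonneg b, norm_nonneg c, norm_nonneg d]
  -- Step 2: the pure second-difference part, via h x = g (x + (b-d)) - g x
  set u : V := b - d with hu
  set h : V → W := fun x => g (x + u) - g x with hh
  have hdh : ∀ x : V, DifferentiableAt ℝ h x := fun x =>
    ((hdg (x + u)).comp x ((differentiableAt_id).add_const u)).sub (hdg x)
  have hfh : ∀ x : V, fderiv ℝ h x = fderiv ℝ g (x + u) - fderiv ℝ g x := by
    intro x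
    have h1 : HasFDerivAt (fun y => g (y + u)) (fderiv ℝ g (x + u)) x := by
      have := (hdg (x + u)).hasFDerivAt.comp x
        ((hasFDerivAt_id x).add_const u)
      exact this
    exact (h1.sub (hdg x).hasFDerivAt).fderiv
  -- segment from d to c
  have seg_bounds : ∀ x ∈ segment ℝ d c, ‖x‖ ≤ S ∧ ‖x + u‖ ≤ S := by
    intro x hx
    rw [segment_eq_image] at hx
    obtain ⟨t, ⟨ht0, ht1⟩, rfl⟩ := hx
    simp only
    have ht1' : (0:ℝ) ≤ 1 - t := by linarith
    constructor
    · have h1 := norm_add_le ((1 - t) • d) (t • c)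
      rw [norm_smul, norm_smul, Real.norm_of_nonneg ht0, Real.norm_of_nonneg ht1'] at h1
      rw [hSdef]
      nlinarith [norm_nonneg a, norm_nonneg b, norm_nonneg c, norm_nonneg d]
    · have heq : (1 - t) • d + t • c + u = (1 - t) • b + t • (c + b - d) := by
        rw [hu]; module
      rw [heq]
      have h1 := norm_add_le ((1 - t) • b) (t • (c + b - d))
      rw [norm_smul, norm_smul, Real.norm_of_nonneg ht0, Real.norm_of_nonneg ht1'] at h1
      have h2 : ‖c + b - d‖ ≤ ‖b‖ + ‖c‖ + ‖d‖ := by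
        calc ‖c + b - d‖ ≤ ‖c + b‖ + ‖d‖ := norm_sub_le _ _
        _ ≤ ‖b‖ + ‖c‖ + ‖d‖ := by linarith [norm_add_le c b]
      rw [hSdef]
      nlinarith [norm_nonneg a, norm_nonneg b, norm_nonneg c, norm_nonneg d,
        norm_nonneg (c + b - d)]
  have e2 : ‖h c - h d‖ ≤ (M * ‖u‖) * ‖c - d‖ := by
    refine (convex_segment d c).norm_image_sub_le_of_norm_fderiv_le
      (fun z _ => hdh z) (fun z hz => ?_) (left_mem_segment ℝ d c)
      (right_mem_segment ℝ d c)
    obtain ⟨hz1, hz2⟩ := seg_bounds z hz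
    rw [hfh]
    calc ‖fderiv ℝ g (z + u) - fderiv ℝ g z‖ ≤ M * ‖z + u - z‖ := lip z (z + u) hz1 hz2
    _ = M * ‖u‖ := by rw [add_sub_cancel_left]
  -- assemble
  have decomp : g a - g b - g c + g d =
      (g a - g (b + c - d)) + (h c - h d) := by
    simp only [hh, hu]
    have h1 : c + (b - d) = b + c - d := by abel
    have h2 : d + (b - d) = b := by abel
    rw [h1, h2]
    abel
  have final : ‖g a - g b - g c + g d‖ ≤ M * ‖a - (b + c - d)‖ + (M * ‖u‖) * ‖c - d‖ := by
    rw [decomp]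
    exact (norm_add_le _ _).trans (add_le_add e1 e2)
  have hab : a - (b + c - d) = a - b - c + d := by abel
  rw [hab] at final
  have hgoal : K * (1 + ‖a‖ + ‖b‖ + ‖c‖ + ‖d‖) ^ m = M := by
    rw [hMdef, hSdef]; ring_nf
  rw [hgoal]
  refine final.trans ?_
  nlinarith [norm_nonneg (a - c), norm_nonneg (c - d), norm_nonneg u,
    norm_nonneg (a - b - c + d), mul_nonneg (norm_nonneg (a - c)) (norm_nonneg (c - d))]
end

section
/- Let (𝓤, ρ) be a metric space, let o ∈ U ⊆ 𝓤 with U nonempty, and on a probability space (Ω, 𝓕, ℙ) let {X^ζ}_{ζ ∈ U} be a family of real-valued random variables, each in L^p(Ω) for every p ∈ [1,∞), which is 𝓛-continuous. Assume moreover that for every R > 0 and every p ∈ [1,∞), sup_{ζ ∈ U, ρ(ζ,o) ≤ R} ‖ e^{|X^ζ|} ‖_{L^p(Ω)} < ∞. Then the family {e^{X^ζ}}_{ζ ∈ U} is 𝓛-continuous. -/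
open MeasureTheory Filter Topology

lemma exp_sub_one_le_aux (x : ℝ) : Real.exp x - 1 ≤ x * Real.exp x := by
  have h := Real.add_one_le_exp (-x)
  rw [Real.exp_neg] at h
  have hpos := Real.exp_pos x
  have hinv : Real.exp x * (Real.exp x)⁻¹ = 1 := mul_inv_cancel₀ hpos.ne'
  nlinarith [mul_le_mul_of_nonneg_left h hpos.le]

lemma abs_exp_sub_exp_le (a b : ℝ) :
    |Real.exp a - Real.exp b| ≤ |a - b| * (Real.exp |a| + Real.exp |b|) := by
  wlog hab : b ≤ a with H
  · rw [abs_sub_comm, abs_sub_comm a b, add_comm]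
    exact H b a (le_of_not_ge hab)
  have ht : 0 ≤ a - b := sub_nonneg.2 hab
  have h0 : Real.exp (a - b) - 1 ≤ (a - b) * Real.exp (a - b) := exp_sub_one_le_aux _
  have hmul : Real.exp b * Real.exp (a - b) = Real.exp a := by
    rw [← Real.exp_add]; ring_nf
  rw [abs_of_nonneg (sub_nonneg.2 (Real.exp_le_exp.2 hab)), abs_of_nonneg ht]
  have h1 : Real.exp a - Real.exp b ≤ (a - b) * Real.exp a := by
    nlinarith [mul_le_mul_of_nonneg_left h0 (Real.exp_pos b).le]
  have hEa : Real.exp a ≤ Real.exp |a| + Real.exp |b| :=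
    le_add_of_le_of_nonneg (Real.exp_le_exp.2 (le_abs_self a)) (Real.exp_pos _).le
  calc Real.exp a - Real.exp b ≤ (a - b) * Real.exp a := h1
    _ ≤ (a - b) * (Real.exp |a| + Real.exp |b|) := mul_le_mul_of_nonneg_left hEa ht

/-- **`𝓛`-continuity of exponentials.** Let `{X^ζ}_{ζ ∈ U}` be an `𝓛`-continuous family
of real random variables (each in every `L^p(Ω)`, `p ∈ [1,∞)`) indexed by a nonempty
subset `U` (with basepoint `o ∈ U`) of a metric space, and assume that for every `R > 0`
and every `p ∈ [1,∞)`, `sup_{ζ ∈ U, dist(ζ,o) ≤ R} ‖e^{|X^ζ|}‖_{L^p} < ∞`. Then the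
family `{e^{X^ζ}}_{ζ ∈ U}` lies in every `L^p(Ω)` and is `𝓛`-continuous. -/
theorem exp_LContinuous
    {𝓤 : Type*} [MetricSpace 𝓤] (U : Set 𝓤) (o : 𝓤) (ho : o ∈ U)
    {Ω : Type*} [MeasurableSpace Ω] (μ : Measure Ω) [IsProbabilityMeasure μ]
    (X : 𝓤 → Ω → ℝ)
    (hmem : ∀ ζ ∈ U, ∀ p : ℝ, 1 ≤ p → MemLp (X ζ) (ENNReal.ofReal p) μ)
    (hcont : ∀ ζ0 ∈ U, ∀ z : ℕ → 𝓤, (∀ k, z k ∈ U \ {ζ0}) → Tendsto z atTop (𝓝 ζ0) →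
      ∀ p : ℝ, 1 ≤ p →
        Tendsto (fun k => eLpNorm (fun ω => X (z k) ω - X ζ0 ω) (ENNReal.ofReal p) μ)
          atTop (𝓝 0))
    (hexp : ∀ R : ℝ, 0 < R → ∀ p : ℝ, 1 ≤ p →
      (⨆ ζ : {ζ : 𝓤 // ζ ∈ U ∧ dist ζ o ≤ R},
        eLpNorm (fun ω => Real.exp |X ζ ω|) (ENNReal.ofReal p) μ) < ⊤) :
    (∀ ζ ∈ U, ∀ p : ℝ, 1 ≤ p →
      MemLp (fun ω => Real.exp (X ζ ω)) (ENNReal.ofReal p) μ) ∧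
    (∀ ζ0 ∈ U, ∀ z : ℕ → 𝓤, (∀ k, z k ∈ U \ {ζ0}) → Tendsto z atTop (𝓝 ζ0) →
      ∀ p : ℝ, 1 ≤ p →
        Tendsto (fun k =>
            eLpNorm (fun ω => Real.exp (X (z k) ω) - Real.exp (X ζ0 ω))
              (ENNReal.ofReal p) μ)
          atTop (𝓝 0)) := by
  -- measurability of `exp ∘ X ζ` and `exp |X ζ|`
  have hmeas : ∀ ζ ∈ U, AEStronglyMeasurable (fun ω => Real.exp (X ζ ω)) μ := fun ζ hζ =>
    (Real.continuous_exp.comp_aestronglyMeasurable (hmem ζ hζ 1 le_rfl).1)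
  have hmeasabs : ∀ ζ ∈ U, AEStronglyMeasurable (fun ω => Real.exp |X ζ ω|) μ := fun ζ hζ =>
    ((Real.continuous_exp.comp continuous_abs).comp_aestronglyMeasurable
      (hmem ζ hζ 1 le_rfl).1)
  -- bound eLpNorm of exp|X ζ| via the supremum hypothesis
  have hbound : ∀ (R : ℝ), 0 < R → ∀ p : ℝ, 1 ≤ p → ∀ ζ, ζ ∈ U → dist ζ o ≤ R →
      eLpNorm (fun ω => Real.exp |X ζ ω|) (ENNReal.ofReal p) μ ≤
        ⨆ ζ' : {ζ' : 𝓤 // ζ' ∈ U ∧ dist ζ' o ≤ R},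
          eLpNorm (fun ω => Real.exp |X ζ' ω|) (ENNReal.ofReal p) μ := by
    intro R hR p hp ζ hζ hd
    exact le_iSup (fun ζ' : {ζ' : 𝓤 // ζ' ∈ U ∧ dist ζ' o ≤ R} =>
      eLpNorm (fun ω => Real.exp |X ζ' ω|) (ENNReal.ofReal p) μ) ⟨ζ, hζ, hd⟩
  constructor
  · -- membership
    intro ζ hζ p hp
    refine ⟨hmeas ζ hζ, ?_⟩
    have h1 : eLpNorm (fun ω => Real.exp (X ζ ω)) (ENNReal.ofReal p) μ ≤
        eLpNorm (fun ω => Real.exp |X ζ ω|) (ENNReal.ofReal p) μ := by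
      refine eLpNorm_mono fun ω => ?_
      simp only [Real.norm_eq_abs, abs_of_nonneg (Real.exp_pos _).le]
      exact Real.exp_le_exp.2 (le_abs_self _)
    have hR : (0 : ℝ) < dist ζ o + 1 := by positivity
    exact lt_of_le_of_lt (h1.trans
      (hbound _ hR p hp ζ hζ (by linarith))) (hexp _ hR p hp)
  · -- 𝓛-continuity
    intro ζ0 hζ0 z hz hzt p hp
    have hzU : ∀ k, z k ∈ U := fun k => (hz k).1
    -- a uniform radius R containing all z k and ζ0
    obtain ⟨R0, hR0⟩ : BddAbove (Set.range fun k => dist (z k) o) :=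
      (Filter.Tendsto.bddAbove_range (a := dist ζ0 o)
        (Tendsto.dist hzt (tendsto_const_nhds (x := o))))
    set R : ℝ := max R0 (dist ζ0 o) + 1 with hRdef
    have hRpos : 0 < R := by
      have : (0 : ℝ) ≤ dist ζ0 o := dist_nonneg
      have : dist ζ0 o ≤ max R0 (dist ζ0 o) := le_max_right _ _
      simp only [hRdef]; nlinarith [dist_nonneg (x := ζ0) (y := o)]
    have hdz : ∀ k, dist (z k) o ≤ R := fun k => by
      have := hR0 (Set.mem_range_self k)
      have := le_max_left R0 (dist ζ0 o)
      simp only [hRdef]; linarith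
    have hdζ0 : dist ζ0 o ≤ R := by
      have := le_max_right R0 (dist ζ0 o)
      simp only [hRdef]; linarith
    -- exponent arithmetic : 1/p = 1/(2p) + 1/(2p)
    have hq : (1 : ℝ) ≤ 2 * p := by linarith
    have hpne : ENNReal.ofReal p ≠ 0 := by
      simp [ENNReal.ofReal_eq_zero]; linarith
    have h2p : ENNReal.ofReal (2 * p) = 2 * ENNReal.ofReal p := by
      rw [ENNReal.ofReal_mul (by norm_num)]; norm_num
    have hpqr : 1 / ENNReal.ofReal p =
        1 / ENNReal.ofReal (2 * p) + 1 / ENNReal.ofReal (2 * p) := by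
      rw [h2p, one_div, one_div, ENNReal.mul_inv (by norm_num) (by norm_num),
        ← two_mul, ← mul_assoc, ENNReal.mul_inv_cancel (by norm_num) (by norm_num),
        one_mul]
    -- the uniform bound M
    set M := ⨆ ζ' : {ζ' : 𝓤 // ζ' ∈ U ∧ dist ζ' o ≤ R},
        eLpNorm (fun ω => Real.exp |X ζ' ω|) (ENNReal.ofReal (2 * p)) μ with hMdef
    have hMlt : M < ⊤ := hexp R hRpos (2 * p) hq
    have hMb : ∀ ζ, ζ ∈ U → dist ζ o ≤ R →
        eLpNorm (fun ω => Real.exp |X ζ ω|) (ENNReal.ofReal (2 * p)) μ ≤ M :=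
      fun ζ hζ hd => hbound R hRpos (2 * p) hq ζ hζ hd
    -- the key estimate for each k
    have key : ∀ k,
        eLpNorm (fun ω => Real.exp (X (z k) ω) - Real.exp (X ζ0 ω)) (ENNReal.ofReal p) μ ≤
        eLpNorm (fun ω => X (z k) ω - X ζ0 ω) (ENNReal.ofReal (2 * p)) μ * (M + M) := by
      intro k
      have hmf : AEStronglyMeasurable (fun ω => X (z k) ω - X ζ0 ω) μ :=
        (hmem (z k) (hzU k) 1 le_rfl).1.sub (hmem ζ0 hζ0 1 le_rfl).1
      have hmg : AEStronglyMeasurable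
          (fun ω => Real.exp |X (z k) ω| + Real.exp |X ζ0 ω|) μ :=
        (hmeasabs (z k) (hzU k)).add (hmeasabs ζ0 hζ0)
      have step1 : eLpNorm (fun ω => Real.exp (X (z k) ω) - Real.exp (X ζ0 ω))
            (ENNReal.ofReal p) μ ≤
          eLpNorm (fun ω => (X (z k) ω - X ζ0 ω) *
            (Real.exp |X (z k) ω| + Real.exp |X ζ0 ω|)) (ENNReal.ofReal p) μ := by
        refine eLpNorm_mono fun ω => ?_
        simp only [Real.norm_eq_abs]
        calc |Real.exp (X (z k) ω) - Real.exp (X ζ0 ω)|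
            ≤ |X (z k) ω - X ζ0 ω| * (Real.exp |X (z k) ω| + Real.exp |X ζ0 ω|) :=
              abs_exp_sub_exp_le _ _
          _ ≤ |(X (z k) ω - X ζ0 ω) * (Real.exp |X (z k) ω| + Real.exp |X ζ0 ω|)| := by
              rw [abs_mul]
              gcongr
              exact le_abs_self _
      have step2 : eLpNorm (fun ω => (X (z k) ω - X ζ0 ω) *
            (Real.exp |X (z k) ω| + Real.exp |X ζ0 ω|)) (ENNReal.ofReal p) μ ≤
          eLpNorm (fun ω => X (z k) ω - X ζ0 ω) (ENNReal.ofReal (2 * p)) μ *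
            eLpNorm (fun ω => Real.exp |X (z k) ω| + Real.exp |X ζ0 ω|)
              (ENNReal.ofReal (2 * p)) μ :=
        by
        haveI : ENNReal.HolderTriple (ENNReal.ofReal (2 * p)) (ENNReal.ofReal (2 * p))
            (ENNReal.ofReal p) := ⟨by simpa only [one_div] using hpqr.symm⟩
        simpa only [ENNReal.coe_one, one_mul] using
          eLpNorm_le_eLpNorm_mul_eLpNorm'_of_norm hmf hmg (· * ·) 1
            (Eventually.of_forall fun ω => by
              simpa only [NNReal.coe_one, one_mul] using (norm_mul_le _ _))
      have step3 : eLpNorm (fun ω => Real.exp |X (z k) ω| + Real.exp |X ζ0 ω|)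
            (ENNReal.ofReal (2 * p)) μ ≤ M + M := by
        refine le_trans (eLpNorm_add_le (hmeasabs (z k) (hzU k)) (hmeasabs ζ0 hζ0)
          (by simpa using ENNReal.one_le_ofReal.2 hq)) ?_
        exact add_le_add (hMb _ (hzU k) (hdz k)) (hMb _ hζ0 hdζ0)
      exact step1.trans (step2.trans (mul_le_mul_right step3 _))
    -- conclude by squeezing
    have hX := hcont ζ0 hζ0 z hz hzt (2 * p) hq
    have hlim : Tendsto (fun k =>
        eLpNorm (fun ω => X (z k) ω - X ζ0 ω) (ENNReal.ofReal (2 * p)) μ * (M + M))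
        atTop (𝓝 0) := by
      have hMne : M + M ≠ ⊤ := (ENNReal.add_lt_top.2 ⟨hMlt, hMlt⟩).ne
      simpa using ENNReal.Tendsto.mul_const hX (Or.inr hMne)
    exact tendsto_of_tendsto_of_tendsto_of_le_of_le tendsto_const_nhds hlim
      (fun k => zero_le) key
end
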